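/- Let n ≥ 2 be an even integer and let p_1, …, p_{n+1} be pairwise distinct prime numbers such that ∑_{j=1}^{n+1} 1/p_j < n/2. Let I be the set of tuples α = (α_1, …, α_{n+1}) of integers with 0 ≤ α_j ≤ p_j − 2 for each j. If (n_α)_{α∈I} are rational numbers such that ∑_{α∈I} n_α ∏_{j=1}^{n+1} ζ_{p_j}^{α_j(β_j+1)} = 0 for every β = (β_1, …, β_{n+1}) ∈ I for which ∑_{j=1}^{n+1} (β_j+1)/p_j < n/2 and ∑_{j=1}^{n+1} (β_j+1)/p_j is not an integer, then n_α = 0 for every α ∈ I. -/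

import Mathlib

open Polynomial


open scoped BigOperators

/-- The standard primitive `d`-th root of unity `exp(2πi/d)`. -/
noncomputable def zeta (d : ℕ) : ℂ := Complex.exp (2 * Real.pi * Complex.I / d)

lemma zeta_prim (d : ℕ) (hd : d ≠ 0) : IsPrimitiveRoot (zeta d) d := by
  simpa [zeta] using Complex.isPrimitiveRoot_exp d hd

-- pow depends only on exponent mod p when z^p = 1
lemma pow_mod_eq (z : ℂ) (p a b : ℕ) (hz : z ^ p = 1) (h : a % p = b % p) : z ^ a = z ^ b := by
  have ha : z ^ a = z ^ (a % p) := by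
    conv_lhs => rw [← Nat.div_add_mod a p]
    rw [pow_add, pow_mul, hz, one_pow, one_mul]
  have hb : z ^ b = z ^ (b % p) := by
    conv_lhs => rw [← Nat.div_add_mod b p]
    rw [pow_add, pow_mul, hz, one_pow, one_mul]
  rw [ha, hb, h]

-- Ramanujan sum over a prime
lemma ram_sum (p : ℕ) (hp : 2 ≤ p) (z : ℂ) (hz : IsPrimitiveRoot z p) (m : ℕ) :
    ∑ u : Fin (p - 1), z ^ ((u.val + 1) * m) = if p ∣ m then ((p : ℂ) - 1) else -1 := by
  split_ifs with hd
  · obtain ⟨k, rfl⟩ := hd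
    have : ∀ u : Fin (p - 1), z ^ ((u.val + 1) * (p * k)) = 1 := by
      intro u
      rw [show (u.val + 1) * (p * k) = p * ((u.val + 1) * k) by ring, pow_mul, hz.pow_eq_one, one_pow]
    rw [Finset.sum_congr rfl (fun u _ => this u)]
    simp [Finset.card_univ]
    push_cast [Nat.cast_sub (by omega : 1 ≤ p)]
    ring
  · set w := z ^ m with hw
    have hw1 : w ≠ 1 := by
      intro hcon
      exact hd (hz.dvd_of_pow_eq_one m hcon)
    have hwp : w ^ p = 1 := by
      rw [hw, ← pow_mul, mul_comm, pow_mul, hz.pow_eq_one, one_pow]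
    have hgeom : ∑ i ∈ Finset.range p, w ^ i = 0 := by
      have := geom_sum_eq hw1 p
      rw [this, hwp]
      simp
    have hre : ∑ u : Fin (p - 1), z ^ ((u.val + 1) * m) = ∑ i ∈ Finset.range (p - 1), w ^ (i + 1) := by
      rw [Fin.sum_univ_eq_sum_range (fun i => z ^ ((i + 1) * m)) (p - 1)]
      refine Finset.sum_congr rfl fun i _ => ?_
      rw [hw, ← pow_mul, mul_comm m (i+1)]
    rw [hre]
    have hp' : p = (p - 1) + 1 := by omega
    have := Finset.sum_range_succ' (fun i => w ^ i) (p - 1)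
    rw [← hp'] at this
    rw [hgeom] at this
    have : (∑ i ∈ Finset.range (p-1), w ^ (i+1)) + w ^ 0 = 0 := this.symm
    simp at this
    linear_combination this

-- swap lemma: sum over pi type of product = product of sums
lemma pi_sum_prod {ι : Type*} [Fintype ι] [DecidableEq ι] {κ : ι → Type*} [∀ i, Fintype (κ i)]
    (f : ∀ i, κ i → ℂ) :
    ∑ x : (∀ i, κ i), ∏ i, f i (x i) = ∏ i, ∑ j, f i j := by
  rw [Finset.prod_univ_sum]
  rw [Fintype.piFinset_univ]

-- CRT existence
lemma crt_exists {ι : Type*} [Fintype ι] (a : ι → ℕ) (ha : ∀ i, (a i).Prime)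
    (hinj : Function.Injective a) (u : ι → ℕ) :
    ∃ t : ℕ, ∀ i, (t : ZMod (a i)) = (u i : ZMod (a i)) := by
  have hcop : Pairwise (Function.onFun Nat.Coprime a) := by
    intro i j hij
    exact (Nat.coprime_primes (ha i) (ha j)).mpr (fun hc => hij (hinj hc))
  have hN : NeZero (∏ i, a i) := ⟨Finset.prod_ne_zero_iff.mpr fun i _ => (ha i).ne_zero⟩
  let e := ZMod.prodEquivPi a hcop
  let t' : ZMod (∏ i, a i) := e.symm (fun i => (u i : ZMod (a i)))
  refine ⟨t'.val, fun i => ?_⟩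
  have hdvd : a i ∣ ∏ k, a k := Finset.dvd_prod_of_mem a (Finset.mem_univ i)
  have hcomp : (Pi.evalRingHom (fun k => ZMod (a k)) i).comp (e : ZMod (∏ k, a k) →+* ∀ k, ZMod (a k))
      = ZMod.castHom hdvd (ZMod (a i)) := RingHom.ext_zmod _ _
  have h1 : (e t') i = (u i : ZMod (a i)) := by
    simp only [t', RingEquiv.apply_symm_apply]
  have h2 : (e t') i = ZMod.castHom hdvd (ZMod (a i)) t' := by
    rw [← hcomp]; rfl
  rw [ZMod.natCast_val, ← ZMod.castHom_apply (h := hdvd), ← h2, h1]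

lemma Tsum (p : ℕ) (hp : 2 ≤ p) (a g : Fin (p - 1)) :
    ∑ b : Fin (p - 1), ((if g = b then (1:ℂ) else 0) + 1) * ((if a = b then (p:ℂ) else 0) - 1)
      = if a = g then (p:ℂ) else 0 := by
  have expand : ∀ b : Fin (p - 1),
      ((if g = b then (1:ℂ) else 0) + 1) * ((if a = b then (p:ℂ) else 0) - 1)
      = (if g = b then (1:ℂ) else 0) * (if a = b then (p:ℂ) else 0)
        - (if g = b then (1:ℂ) else 0) + (if a = b then (p:ℂ) else 0) - 1 := by
    intro b; ring
  rw [Finset.sum_congr rfl (fun b _ => expand b)]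
  have h1 : ∑ b : Fin (p-1), (if g = b then (1:ℂ) else 0) * (if a = b then (p:ℂ) else 0)
      = if a = g then (p:ℂ) else 0 := by
    have : ∀ b : Fin (p-1), (if g = b then (1:ℂ) else 0) * (if a = b then (p:ℂ) else 0)
        = if g = b then (if a = b then (p:ℂ) else 0) else 0 := by
      intro b; split_ifs <;> simp
    rw [Finset.sum_congr rfl (fun b _ => this b), Finset.sum_ite_eq]
    simp
  have h2 : ∑ b : Fin (p-1), (if g = b then (1:ℂ) else 0) = 1 := by
    rw [Finset.sum_ite_eq]; simp
  have h3 : ∑ b : Fin (p-1), (if a = b then (p:ℂ) else 0) = p := by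
    rw [Finset.sum_ite_eq]; simp
  have hcard : ∑ _b : Fin (p-1), (1:ℂ) = (p:ℂ) - 1 := by
    simp [Finset.card_univ]
    push_cast [Nat.cast_sub (by omega : 1 ≤ p)]
    ring
  simp only [Finset.sum_sub_distrib, Finset.sum_add_distrib, h1, h2, h3, hcard]
  ring

lemma conj_rel {ι : Type*} [Fintype ι] (N : ℕ) (hN : 0 < N) (c : ι → ℚ) (e : ι → ℕ)
    (hx : ∑ i, (c i : ℂ) * (zeta N) ^ (e i) = 0) (t : ℕ) (ht : Nat.Coprime t N) :
    ∑ i, (c i : ℂ) * (zeta N) ^ (t * e i) = 0 := by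
  have hprim : IsPrimitiveRoot (zeta N) N := zeta_prim N hN.ne'
  set P : Polynomial ℚ := ∑ i, Polynomial.C (c i) * Polynomial.X ^ (e i) with hP
  have haeval : ∀ w : ℂ, Polynomial.aeval w P = ∑ i, (c i : ℂ) * w ^ (e i) := by
    intro w
    simp [hP, map_sum]
  have hP0 : Polynomial.aeval (zeta N) P = 0 := by rw [haeval]; exact hx
  have hdvd : minpoly ℚ (zeta N) ∣ P := minpoly.dvd ℚ (zeta N) hP0
  have hmin : Polynomial.cyclotomic N ℚ = minpoly ℚ (zeta N) :=
    Polynomial.cyclotomic_eq_minpoly_rat hprim hN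
  have hprim' : IsPrimitiveRoot ((zeta N) ^ t) N := hprim.pow_of_coprime t ht
  have hroot : Polynomial.aeval ((zeta N) ^ t) (minpoly ℚ (zeta N)) = 0 := by
    rw [← hmin, Polynomial.aeval_def, ← Polynomial.eval_map, Polynomial.map_cyclotomic]
    exact hprim'.isRoot_cyclotomic hN
  obtain ⟨Q, hQ⟩ := hdvd
  have : Polynomial.aeval ((zeta N) ^ t) P = 0 := by
    rw [hQ, map_mul, hroot, zero_mul]
  rw [haeval] at this
  calc ∑ i, (c i : ℂ) * (zeta N) ^ (t * e i)
      = ∑ i, (c i : ℂ) * ((zeta N) ^ t) ^ (e i) := by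
        refine Finset.sum_congr rfl fun i _ => ?_
        rw [← pow_mul]
    _ = 0 := this

lemma zeta_mul (p q : ℕ) (hp : 0 < p) (hq : 0 < q) : zeta (p * q) ^ q = zeta p := by
  rw [zeta, zeta, ← Complex.exp_nat_mul]
  congr 1
  have hp' : (p:ℂ) ≠ 0 := Nat.cast_ne_zero.mpr hp.ne'
  have hq' : (q:ℂ) ≠ 0 := Nat.cast_ne_zero.mpr hq.ne'
  push_cast
  field_simp

set_option maxHeartbeats 1600000 in
theorem stmt7 (n : ℕ) (hn : Even n) (hn2 : 2 ≤ n)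
    (p : Fin (n + 1) → ℕ) (hp : ∀ j, (p j).Prime) (hdist : Function.Injective p)
    (hsum : ∑ j, (1 : ℚ) / (p j) < (n : ℚ) / 2)
    (c : (∀ j, Fin (p j - 1)) → ℚ)
    (h : ∀ β : (∀ j, Fin (p j - 1)),
        (∑ j, ((β j : ℚ) + 1) / (p j) < (n : ℚ) / 2) →
        (∀ z : ℤ, (∑ j, ((β j : ℚ) + 1) / (p j)) ≠ (z : ℚ)) →
        ∑ α : (∀ j, Fin (p j - 1)),
          (c α : ℂ) * ∏ j, zeta (p j) ^ ((α j : ℕ) * ((β j : ℕ) + 1)) = 0) :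
    ∀ α, c α = 0 := by
  classical
  have hp2 : ∀ j, 2 ≤ p j := fun j => (hp j).two_le
  set N := ∏ j, p j with hNdef
  have hNpos : 0 < N := Finset.prod_pos fun j _ => by have := hp2 j; omega
  set q : Fin (n+1) → ℕ := fun j => ∏ k ∈ Finset.univ.erase j, p k with hqdef
  have hq : ∀ j, p j * q j = N := fun j => Finset.mul_prod_erase _ _ (Finset.mem_univ j)
  -- β₀ = 0
  set β₀ : ∀ j, Fin (p j - 1) := fun j => ⟨0, by have := hp2 j; omega⟩ with hβ₀
  have cond1 : ∑ j, ((β₀ j : ℚ) + 1) / (p j) < (n : ℚ) / 2 := by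
    simpa [hβ₀] using hsum
  have nonint : ∀ z : ℤ, (∑ j, (1:ℚ) / (p j)) ≠ (z : ℚ) := by
    intro z hz
    have hpj0 : ∀ j, (p j : ℚ) ≠ 0 := fun j => by
      have := hp2 j; positivity
    have hmul : ∀ j, (1:ℚ) / (p j) * (N : ℚ) = (q j : ℚ) := by
      intro j
      have : (N : ℚ) = (p j : ℚ) * (q j : ℚ) := by exact_mod_cast (hq j).symm
      rw [this]
      field_simp
      exact mul_div_cancel_left₀ _ (hpj0 j)
    have hkey : (∑ j, (q j : ℚ)) = (z : ℚ) * (N : ℚ) := by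
      calc (∑ j, (q j : ℚ)) = ∑ j, (1:ℚ) / (p j) * (N : ℚ) :=
            Finset.sum_congr rfl fun j _ => (hmul j).symm
        _ = (∑ j, (1:ℚ) / (p j)) * (N : ℚ) := by rw [Finset.sum_mul]
        _ = (z : ℚ) * (N : ℚ) := by rw [hz]
    have hkeyZ : (∑ j, (q j : ℤ)) = z * (N : ℤ) := by exact_mod_cast hkey
    have hdvdN : (p 0 : ℤ) ∣ z * (N : ℤ) :=
      Dvd.dvd.mul_left (Int.natCast_dvd_natCast.mpr (Finset.dvd_prod_of_mem p (Finset.mem_univ 0))) z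
    have hdvdj : ∀ j ∈ Finset.univ.erase (0 : Fin (n+1)), (p 0 : ℤ) ∣ (q j : ℤ) := by
      intro j hj
      have hj0 : j ≠ 0 := (Finset.mem_erase.mp hj).1
      refine Int.natCast_dvd_natCast.mpr (Finset.dvd_prod_of_mem p ?_)
      exact Finset.mem_erase.mpr ⟨fun hc => hj0 hc.symm, Finset.mem_univ _⟩
    have hsplit : (q 0 : ℤ) + ∑ j ∈ Finset.univ.erase (0 : Fin (n+1)), (q j : ℤ)
        = ∑ j, (q j : ℤ) :=
      Finset.add_sum_erase Finset.univ (fun j => (q j : ℤ)) (Finset.mem_univ (0 : Fin (n+1)))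
    have hdvdq0 : (p 0 : ℤ) ∣ (q 0 : ℤ) := by
      have h1 : (p 0 : ℤ) ∣ ∑ j ∈ Finset.univ.erase (0 : Fin (n+1)), (q j : ℤ) :=
        Finset.dvd_sum hdvdj
      have h2 : (p 0 : ℤ) ∣ ∑ j, (q j : ℤ) := hkeyZ ▸ hdvdN
      rw [← hsplit] at h2
      simpa using dvd_sub h2 h1
    have hdvdq0' : p 0 ∣ q 0 := Int.natCast_dvd_natCast.mp hdvdq0
    obtain ⟨k, hk, hdk⟩ := (Nat.Prime.prime (hp 0)).exists_mem_finset_dvd hdvdq0'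
    have hpk : p 0 = p k := (Nat.prime_dvd_prime_iff_eq (hp 0) (hp k)).mp hdk
    have h0k : (0 : Fin (n+1)) = k := hdist hpk
    exact (Finset.mem_erase.mp hk).1 h0k.symm
  have hval0 : ∀ j, ((β₀ j : ℕ) : ℚ) = 0 := fun j => by simp [hβ₀]
  have cond2 : ∀ z : ℤ, (∑ j, ((β₀ j : ℚ) + 1) / (p j)) ≠ (z : ℚ) := by
    intro z
    have : (∑ j, ((β₀ j : ℚ) + 1) / (p j)) = ∑ j, (1:ℚ) / (p j) :=
      Finset.sum_congr rfl fun j _ => by rw [hval0 j, zero_add]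
    rw [this]
    exact nonint z
  have hβ := h β₀ cond1 cond2
  have hqpos : ∀ j, 0 < q j := fun j => Finset.prod_pos fun k _ => by have := hp2 k; omega
  have hzq : ∀ j, zeta N ^ (q j) = zeta (p j) := by
    intro j
    rw [← hq j]
    exact zeta_mul (p j) (q j) (by have := hp2 j; omega) (hqpos j)
  have hprimp : ∀ j, IsPrimitiveRoot (zeta (p j)) (p j) :=
    fun j => zeta_prim (p j) (by have := hp2 j; omega)
  set e : (∀ j, Fin (p j - 1)) → ℕ := fun α => ∑ j, q j * (α j : ℕ) with hedef
  have hx : ∑ α : (∀ j, Fin (p j - 1)), (c α : ℂ) * zeta N ^ (e α) = 0 := by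
    refine (Finset.sum_congr rfl fun α _ => ?_).trans hβ
    congr 1
    calc zeta N ^ (e α) = ∏ j, zeta N ^ (q j * (α j : ℕ)) :=
          (Finset.prod_pow_eq_pow_sum Finset.univ _ _).symm
      _ = ∏ j, zeta (p j) ^ ((α j : ℕ) * ((β₀ j : ℕ) + 1)) := by
          refine Finset.prod_congr rfl fun j _ => ?_
          rw [← hzq j, ← pow_mul]
          congr 1
          have hb : ((β₀ j : ℕ)) = 0 := by simp [hβ₀]
          rw [hb]
          ring
  -- the key vanishing equations
  have E : ∀ α₀ : (∀ j, Fin (p j - 1)),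
      ∑ α : (∀ j, Fin (p j - 1)), (c α : ℂ) *
        ∏ j, ((if α j = α₀ j then (p j : ℂ) else 0) - 1) = 0 := by
    intro α₀
    set f : ℕ := ∑ j, q j * (p j - (α₀ j : ℕ)) with hfdef
    set m : (∀ j, Fin (p j - 1)) → Fin (n+1) → ℕ :=
      fun α j => (α j : ℕ) + (p j - (α₀ j : ℕ)) with hmdef
    have hef : ∀ α, e α + f = ∑ j, q j * m α j := by
      intro α
      rw [hedef, hfdef, ← Finset.sum_add_distrib]
      exact Finset.sum_congr rfl fun j _ => by rw [hmdef]; ring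
    have hx' : ∑ α : (∀ j, Fin (p j - 1)), (c α : ℂ) * zeta N ^ (e α + f) = 0 := by
      have hh : ∀ α : (∀ j, Fin (p j - 1)), (c α : ℂ) * zeta N ^ (e α + f)
          = ((c α : ℂ) * zeta N ^ (e α)) * zeta N ^ f := fun α => by rw [pow_add]; ring
      calc ∑ α : (∀ j, Fin (p j - 1)), (c α : ℂ) * zeta N ^ (e α + f)
          = ∑ α : (∀ j, Fin (p j - 1)), ((c α : ℂ) * zeta N ^ (e α)) * zeta N ^ f :=
            Finset.sum_congr rfl fun α _ => hh α
        _ = (∑ α : (∀ j, Fin (p j - 1)), (c α : ℂ) * zeta N ^ (e α)) * zeta N ^ f :=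
            (Finset.sum_mul _ _ _).symm
        _ = 0 := by rw [hx, zero_mul]
    choose t ht using fun u : (∀ j, Fin (p j - 1)) =>
      crt_exists p hp hdist (fun j => (u j : ℕ) + 1)
    have htmod : ∀ u j, t u % p j = ((u j : ℕ) + 1) % p j :=
      fun u j => (ZMod.natCast_eq_natCast_iff' _ _ _).mp (ht u j)
    have hulb : ∀ (u : (∀ j, Fin (p j - 1))) j, (u j : ℕ) + 1 < p j := by
      intro u j
      have h1 := (u j).isLt
      have h2 := hp2 j
      omega
    have hcop : ∀ u, Nat.Coprime (t u) N := by
      intro u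
      have : N = ∏ j, p j := hNdef
      rw [this]
      refine Nat.Coprime.prod_right fun j _ => ?_
      have hnd : ¬ p j ∣ t u := by
        intro hdvd
        have h0 : t u % p j = 0 := Nat.mod_eq_zero_of_dvd hdvd
        have h1 := htmod u j
        have h2 := hulb u j
        rw [Nat.mod_eq_of_lt h2] at h1
        omega
      exact Nat.coprime_comm.mp ((hp j).coprime_iff_not_dvd.mpr hnd)
    have R : ∀ u : (∀ j, Fin (p j - 1)), ∑ α : (∀ j, Fin (p j - 1)), (c α : ℂ)
        * ∏ j, zeta (p j) ^ (((u j : ℕ) + 1) * m α j) = 0 := by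
      intro u
      have hc := conj_rel N hNpos c (fun α => e α + f) hx' (t u) (hcop u)
      rw [← hc]
      refine Finset.sum_congr rfl fun α _ => ?_
      congr 1
      show ∏ j, zeta (p j) ^ (((u j : ℕ) + 1) * m α j) = zeta N ^ (t u * (e α + f))
      rw [hef α, Finset.mul_sum, ← Finset.prod_pow_eq_pow_sum]
      refine Finset.prod_congr rfl fun j _ => ?_
      have hstep : zeta N ^ (t u * (q j * m α j)) = zeta (p j) ^ (t u * m α j) := by
        rw [show t u * (q j * m α j) = q j * (t u * m α j) by ring, pow_mul, hzq j]
      rw [hstep]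
      have hmeq : t u ≡ (u j : ℕ) + 1 [MOD p j] := htmod u j
      exact pow_mod_eq _ (p j) _ _ ((hprimp j).pow_eq_one) ((hmeq.mul_right (m α j)).symm)
    have hsum0 : ∑ α : (∀ j, Fin (p j - 1)), (c α : ℂ)
        * ∏ j, (if p j ∣ m α j then ((p j : ℂ) - 1) else -1) = 0 := by
      have h1 : ∑ u : (∀ j, Fin (p j - 1)), ∑ α : (∀ j, Fin (p j - 1)), (c α : ℂ)
          * ∏ j, zeta (p j) ^ (((u j : ℕ) + 1) * m α j) = 0 :=
        Finset.sum_eq_zero fun u _ => R u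
      have h1' : ∑ α : (∀ j, Fin (p j - 1)), ∑ u : (∀ j, Fin (p j - 1)), (c α : ℂ)
          * ∏ j, zeta (p j) ^ (((u j : ℕ) + 1) * m α j) = 0 :=
        Finset.sum_comm.trans h1
      refine (Finset.sum_congr rfl fun α _ => ?_).trans h1'
      rw [← Finset.mul_sum]
      congr 1
      calc ∏ j, (if p j ∣ m α j then ((p j : ℂ) - 1) else -1)
          = ∏ j, ∑ uj : Fin (p j - 1), zeta (p j) ^ ((uj.val + 1) * m α j) := by
            refine Finset.prod_congr rfl fun j _ => ?_
            rw [ram_sum (p j) (hp2 j) (zeta (p j)) (hprimp j) (m α j)]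
        _ = ∑ u : (∀ j, Fin (p j - 1)), ∏ j, zeta (p j) ^ (((u j : ℕ) + 1) * m α j) :=
            (pi_sum_prod (fun (j : Fin (n+1)) (uj : Fin (p j - 1)) => zeta (p j) ^ ((uj.val + 1) * m α j))).symm
    refine (Finset.sum_congr rfl fun α _ => ?_).trans hsum0
    congr 1
    refine Finset.prod_congr rfl fun j _ => ?_
    have hiff : p j ∣ m α j ↔ α j = α₀ j := by
      have h1 := (α j).isLt
      have h2 := (α₀ j).isLt
      have h3 := hp2 j
      have hm : m α j = (α j : ℕ) + (p j - (α₀ j : ℕ)) := by rw [hmdef]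
      constructor
      · intro hd
        have hmp : m α j = p j :=
          Nat.eq_of_dvd_of_lt_two_mul (by omega) hd (by omega)
        exact Fin.ext (by omega)
      · intro heq
        have : m α j = p j := by rw [hm, heq]; omega
        rw [this]
    by_cases hc : α j = α₀ j
    · rw [if_pos hc, if_pos (hiff.mpr hc)]
    · rw [if_neg hc, if_neg (fun hd => hc (hiff.mp hd))]
      ring
  -- invert the system
  intro γ
  have hNC : (N : ℂ) ≠ 0 := Nat.cast_ne_zero.mpr hNpos.ne'
  have F : (c γ : ℂ) * (N : ℂ) = 0 := by
    have h1 : ∑ α₀ : (∀ j, Fin (p j - 1)), ∑ α : (∀ j, Fin (p j - 1)),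
        (c α : ℂ) * ∏ j, (((if γ j = α₀ j then (1:ℂ) else 0) + 1)
          * ((if α j = α₀ j then (p j : ℂ) else 0) - 1)) = 0 := by
      have hterm : ∀ α₀ : (∀ j, Fin (p j - 1)), ∑ α : (∀ j, Fin (p j - 1)),
          (c α : ℂ) * ∏ j, (((if γ j = α₀ j then (1:ℂ) else 0) + 1)
            * ((if α j = α₀ j then (p j : ℂ) else 0) - 1)) = 0 := by
        intro α₀
        have hfac : ∀ α : (∀ j, Fin (p j - 1)),
            (c α : ℂ) * ∏ j, (((if γ j = α₀ j then (1:ℂ) else 0) + 1)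
              * ((if α j = α₀ j then (p j : ℂ) else 0) - 1))
            = (∏ j, ((if γ j = α₀ j then (1:ℂ) else 0) + 1)) *
              ((c α : ℂ) * ∏ j, ((if α j = α₀ j then (p j : ℂ) else 0) - 1)) := by
          intro α
          rw [Finset.prod_mul_distrib]
          ring
        calc ∑ α : (∀ j, Fin (p j - 1)), (c α : ℂ) * ∏ j, (((if γ j = α₀ j then (1:ℂ) else 0) + 1)
              * ((if α j = α₀ j then (p j : ℂ) else 0) - 1))
            = ∑ α : (∀ j, Fin (p j - 1)), (∏ j, ((if γ j = α₀ j then (1:ℂ) else 0) + 1)) *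
              ((c α : ℂ) * ∏ j, ((if α j = α₀ j then (p j : ℂ) else 0) - 1)) :=
              Finset.sum_congr rfl fun α _ => hfac α
          _ = (∏ j, ((if γ j = α₀ j then (1:ℂ) else 0) + 1)) *
              (∑ α : (∀ j, Fin (p j - 1)), (c α : ℂ) * ∏ j, ((if α j = α₀ j then (p j : ℂ) else 0) - 1)) :=
              (Finset.mul_sum _ _ _).symm
          _ = 0 := by rw [E α₀, mul_zero]
      exact Finset.sum_eq_zero fun α₀ _ => hterm α₀
    have h2 : ∀ α : (∀ j, Fin (p j - 1)), ∑ α₀ : (∀ j, Fin (p j - 1)),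
        (c α : ℂ) * ∏ j, (((if γ j = α₀ j then (1:ℂ) else 0) + 1)
          * ((if α j = α₀ j then (p j : ℂ) else 0) - 1))
        = (c α : ℂ) * ∏ j, (if α j = γ j then (p j : ℂ) else 0) := by
      intro α
      rw [← Finset.mul_sum]
      congr 1
      calc ∑ α₀ : (∀ j, Fin (p j - 1)), ∏ j, (((if γ j = α₀ j then (1:ℂ) else 0) + 1)
              * ((if α j = α₀ j then (p j : ℂ) else 0) - 1))
          = ∏ j, ∑ b : Fin (p j - 1), (((if γ j = b then (1:ℂ) else 0) + 1)
              * ((if α j = b then (p j : ℂ) else 0) - 1)) :=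
            pi_sum_prod (fun (j : Fin (n+1)) (b : Fin (p j - 1)) =>
              (((if γ j = b then (1:ℂ) else 0) + 1) * ((if α j = b then (p j : ℂ) else 0) - 1)))
        _ = ∏ j, (if α j = γ j then (p j : ℂ) else 0) := by
            refine Finset.prod_congr rfl fun j _ => ?_
            exact Tsum (p j) (hp2 j) (α j) (γ j)
    have h1' : ∑ α : (∀ j, Fin (p j - 1)), ∑ α₀ : (∀ j, Fin (p j - 1)),
        (c α : ℂ) * ∏ j, (((if γ j = α₀ j then (1:ℂ) else 0) + 1)
          * ((if α j = α₀ j then (p j : ℂ) else 0) - 1)) = 0 := by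
      rw [Finset.sum_comm]
      exact h1
    have h4 : ∑ α : (∀ j, Fin (p j - 1)),
        (c α : ℂ) * ∏ j, (if α j = γ j then (p j : ℂ) else 0) = 0 :=
      (Finset.sum_congr rfl fun α _ => (h2 α).symm).trans h1'
    have h3 : ∑ α : (∀ j, Fin (p j - 1)),
        (c α : ℂ) * ∏ j, (if α j = γ j then (p j : ℂ) else 0)
        = (c γ : ℂ) * (N : ℂ) := by
      rw [Finset.sum_eq_single γ]
      · congr 1
        rw [show (N : ℂ) = ∏ j, (p j : ℂ) by rw [hNdef]; push_cast; rfl]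
        exact Finset.prod_congr rfl fun j _ => by simp
      · intro α _ hne
        have : ∃ j, α j ≠ γ j := by
          by_contra hcon
          push_neg at hcon
          exact hne (funext hcon)
        obtain ⟨j, hj⟩ := this
        have hz0 : (if α j = γ j then (p j : ℂ) else 0) = 0 := if_neg hj
        rw [Finset.prod_eq_zero (Finset.mem_univ j) hz0, mul_zero]
      · intro hcon
        exact absurd (Finset.mem_univ γ) hcon
    rw [h3] at h4
    exact h4
  have : (c γ : ℂ) = 0 := by
    rcases mul_eq_zero.mp F with h | h
    · exact h
    · exact absurd h hNC
  exact_mod_cast this
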